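/- Let b ≥ a ≥ 3 and let G be a graph containing a path P = (p_1, ..., p_ℓ) with ℓ ≥ 3b. If there exist indices i, j with a+1 ≤ i, j ≤ ℓ−a, j ≥ i+4, and a path Q in G between p_i and p_j whose only vertices on P are its endpoints p_i and p_j, then G contains a subgraph isomorphic to S_{3,a,b}. -/

import Mathlib

/-- `G` contains a path on `r` vertices, witnessed by an injective `f : Fin r → V`
with consecutive vertices adjacent. -/
def IsPathEmb {V : Type*} (G : SimpleGraph V) (r : ℕ) (f : Fin r → V) : Prop :=
  Function.Injective f ∧
    ∀ (i : ℕ) (hi : i + 1 < r), G.Adj (f ⟨i, Nat.lt_of_succ_lt hi⟩) (f ⟨i + 1, hi⟩)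

/-- `G` contains the path `P_r` on `r` vertices as a subgraph. -/
def ContainsPathOn {V : Type*} (G : SimpleGraph V) (r : ℕ) : Prop :=
  ∃ f : Fin r → V, IsPathEmb G r f

/-- `G` is 2-connected: at least 3 vertices, connected, and no cut vertex. -/
def TwoConnected {V : Type*} (G : SimpleGraph V) : Prop :=
  3 ≤ Nat.card V ∧ G.Connected ∧ ∀ v : V, (G.induce {u : V | u ≠ v}).Connected

/-- `G` contains the subdivided claw `S_{a,b,c}` (three paths of edge-lengths
`a`, `b`, `c` sharing one common endpoint, otherwise disjoint) as a subgraph. -/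
def ContainsSubdividedClaw {V : Type*} (G : SimpleGraph V) (a b c : ℕ) : Prop :=
  ∃ (f : Fin (a + 1) → V) (g : Fin (b + 1) → V) (h : Fin (c + 1) → V),
    f 0 = g 0 ∧ g 0 = h 0 ∧
    IsPathEmb G (a + 1) f ∧ IsPathEmb G (b + 1) g ∧ IsPathEmb G (c + 1) h ∧
    (∀ i j, f i = g j → i = 0 ∧ j = 0) ∧
    (∀ i j, f i = h j → i = 0 ∧ j = 0) ∧
    (∀ i j, g i = h j → i = 0 ∧ j = 0)

section
variable {V : Type*} {G : SimpleGraph V}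

private lemma path_inj {ℓ : ℕ} {p : Fin ℓ → V} (hP : IsPathEmb G ℓ p)
    {s t : ℕ} (hs : s < ℓ) (ht : t < ℓ) (h : p ⟨s, hs⟩ = p ⟨t, ht⟩) : s = t :=
  congrArg Fin.val (hP.1 h)

private lemma path_adj {ℓ : ℕ} {p : Fin ℓ → V} (hP : IsPathEmb G ℓ p)
    {s t : ℕ} (hs : s < ℓ) (ht : t < ℓ) (h : t = s + 1) :
    G.Adj (p ⟨s, hs⟩) (p ⟨t, ht⟩) := by
  subst h; exact hP.2 s ht

private lemma q_meets_p {ℓ m k e : ℕ} {p : Fin ℓ → V} {q : Fin (m + 2) → V}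
    (hP : IsPathEmb G ℓ p) (hk : k < ℓ) (he : e < ℓ)
    (hq0 : q 0 = p ⟨k, hk⟩) (hqL : q (Fin.last (m + 1)) = p ⟨e, he⟩)
    (hqP : ∀ t : Fin (m + 2), t ≠ 0 → t ≠ Fin.last (m + 1) → q t ∉ Set.range p)
    {t s : ℕ} (ht : t < m + 2) (hs : s < ℓ) (h : q ⟨t, ht⟩ = p ⟨s, hs⟩) :
    (t = 0 ∧ s = k) ∨ (t = m + 1 ∧ s = e) := by
  by_cases h0 : t = 0
  · subst h0
    have : q 0 = p ⟨s, hs⟩ := by convert h using 2; exact Fin.ext (by simp)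
    left
    exact ⟨rfl, (path_inj hP hk hs (hq0 ▸ this)).symm⟩
  · by_cases hL : t = m + 1
    · subst hL
      have : q (Fin.last (m+1)) = p ⟨s, hs⟩ := by convert h using 2; exact Fin.ext (by simp)
      right
      exact ⟨rfl, (path_inj hP he hs (hqL ▸ this)).symm⟩
    · exact absurd ⟨⟨s, hs⟩, h.symm⟩
        (hqP ⟨t, ht⟩ (by simp [Fin.ext_iff, h0]) (by simp [Fin.ext_iff, hL]))

private lemma q_inj' {m : ℕ} {q : Fin (m + 2) → V} (hq : Function.Injective q)
    {t s : ℕ} (ht : t < m + 2) (hs : s < m + 2) (h : q ⟨t, ht⟩ = q ⟨s, hs⟩) : t = s :=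
  congrArg Fin.val (hq h)


private lemma fin_eq_zero {n : ℕ} (t : Fin (n + 1)) (h : (t : ℕ) = 0) : t = 0 :=
  Fin.ext (by simp [h])

/-- Core construction 1: center `p k`, 3-arm forward, b-arm backward,
a-arm along `q` continued forward past `e`. -/
private lemma core1 {ℓ a b m : ℕ} {p : Fin ℓ → V} {q : Fin (m + 2) → V}
    (ha : 3 ≤ a) (hab : a ≤ b) (hP : IsPathEmb G ℓ p)
    {k e : ℕ} (hk : k < ℓ) (he : e < ℓ)
    (hbk : b ≤ k) (hke : k + 4 ≤ e) (hea : e + a + 1 ≤ ℓ)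
    (hq : Function.Injective q) (hq0 : q 0 = p ⟨k, hk⟩)
    (hqL : q (Fin.last (m + 1)) = p ⟨e, he⟩)
    (hqa : ∀ (t : ℕ) (ht : t + 1 < m + 2), G.Adj (q ⟨t, Nat.lt_of_succ_lt ht⟩) (q ⟨t + 1, ht⟩))
    (hqP : ∀ t : Fin (m + 2), t ≠ 0 → t ≠ Fin.last (m + 1) → q t ∉ Set.range p) :
    ContainsSubdividedClaw G 3 a b := by
  refine ⟨fun t => p ⟨k + t, by have := t.isLt; omega⟩,
    fun t => if h : (t : ℕ) < m + 2 then q ⟨t, h⟩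
      else p ⟨e + ((t : ℕ) - (m + 1)), by have := t.isLt; omega⟩,
    fun t => p ⟨k - t, by omega⟩, ?_, ?_, ?_, ?_, ?_, ?_, ?_, ?_⟩
  · -- f 0 = g 0
    dsimp only
    rw [dif_pos (by simp)]
    simp only [Fin.val_zero]
    rw [show (⟨0, by omega⟩ : Fin (m + 2)) = 0 from Fin.ext (by simp), hq0]
    exact congrArg p (Fin.ext (by simp))
  · -- g 0 = h 0
    dsimp only
    rw [dif_pos (by simp)]
    simp only [Fin.val_zero]
    rw [show (⟨0, by omega⟩ : Fin (m + 2)) = 0 from Fin.ext (by simp), hq0]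
    exact congrArg p (Fin.ext (by simp))
  · -- IsPathEmb f
    constructor
    · intro t₁ t₂ h
      simp only [] at h
      have := path_inj hP (by have := t₁.isLt; omega) (by have := t₂.isLt; omega) h
      exact Fin.ext (by omega)
    · intro t ht
      simp only [Fin.val_mk]
      exact path_adj hP _ _ (by omega)
  · -- IsPathEmb g
    constructor
    · intro t₁ t₂ h
      have h1 := t₁.isLt; have h2 := t₂.isLt
      simp only [] at h
      split_ifs at h with c1 c2 c2
      · exact Fin.ext (q_inj' hq _ _ h)
      · rcases q_meets_p hP hk he hq0 hqL hqP _ _ h with ⟨_, h'⟩ | ⟨_, h'⟩ <;> omega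
      · rcases q_meets_p hP hk he hq0 hqL hqP _ _ h.symm with ⟨_, h'⟩ | ⟨_, h'⟩ <;> omega
      · have := path_inj hP _ _ h
        exact Fin.ext (by omega)
    · intro t ht
      simp only [Fin.val_mk]
      split_ifs with c1 c2 c2
      · exact hqa t c2
      · have ht' : t = m + 1 := by omega
        subst ht'
        rw [show (⟨m + 1, c1⟩ : Fin (m + 2)) = Fin.last (m + 1) from rfl, hqL]
        exact path_adj hP _ _ (by omega)
      · omega
      · exact path_adj hP _ _ (by omega)
  · -- IsPathEmb h
    constructor
    · intro t₁ t₂ h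
      have h1 := t₁.isLt; have h2 := t₂.isLt
      simp only [] at h
      have := path_inj hP _ _ h
      exact Fin.ext (by omega)
    · intro t ht
      simp only [Fin.val_mk]
      exact (path_adj hP (s := k - (t + 1)) (t := k - t) (by omega) (by omega)
        (by omega)).symm
  · -- f vs g
    intro t s h
    have h1 := t.isLt; have h2 := s.isLt
    simp only [] at h
    split_ifs at h with c1
    · rcases q_meets_p hP hk he hq0 hqL hqP _ _ h.symm with ⟨h', h''⟩ | ⟨h', h''⟩
      · exact ⟨fin_eq_zero _ (by omega), fin_eq_zero _ (by omega)⟩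
      · omega
    · have := path_inj hP _ _ h
      omega
  · -- f vs h
    intro t s h
    have h1 := t.isLt; have h2 := s.isLt
    simp only [] at h
    have := path_inj hP _ _ h
    exact ⟨fin_eq_zero _ (by omega), fin_eq_zero _ (by omega)⟩
  · -- g vs h
    intro t s h
    have h1 := t.isLt; have h2 := s.isLt
    simp only [] at h
    split_ifs at h with c1
    · rcases q_meets_p hP hk he hq0 hqL hqP _ _ h with ⟨h', h''⟩ | ⟨h', h''⟩
      · exact ⟨fin_eq_zero _ (by omega), fin_eq_zero _ (by omega)⟩
      · omega
    · have := path_inj hP _ _ h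
      omega


private lemma chain_adj {r : ℕ} {f : Fin r → V}
    (hf : ∀ (t : ℕ) (ht : t + 1 < r), G.Adj (f ⟨t, Nat.lt_of_succ_lt ht⟩) (f ⟨t + 1, ht⟩))
    {s t : ℕ} (hs : s < r) (ht : t < r) (h : t = s + 1) : G.Adj (f ⟨s, hs⟩) (f ⟨t, ht⟩) := by
  subst h; exact hf s ht

/-- Core construction 2: center `p k`, 3-arm forward, b-arm backward (staying above `i0`),
a-arm along reversed `q` continued backward below `i0`. -/
private lemma core2 {ℓ a b m : ℕ} {p : Fin ℓ → V} {q : Fin (m + 2) → V}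
    (ha : 3 ≤ a) (hab : a ≤ b) (hP : IsPathEmb G ℓ p)
    {i0 k : ℕ} (hi0 : i0 < ℓ) (hk : k < ℓ)
    (hai : a ≤ i0) (hibk : i0 + b + 1 ≤ k) (hkl : k + 4 ≤ ℓ)
    (hq : Function.Injective q) (hq0 : q 0 = p ⟨i0, hi0⟩)
    (hqL : q (Fin.last (m + 1)) = p ⟨k, hk⟩)
    (hqa : ∀ (t : ℕ) (ht : t + 1 < m + 2), G.Adj (q ⟨t, Nat.lt_of_succ_lt ht⟩) (q ⟨t + 1, ht⟩))
    (hqP : ∀ t : Fin (m + 2), t ≠ 0 → t ≠ Fin.last (m + 1) → q t ∉ Set.range p) :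
    ContainsSubdividedClaw G 3 a b := by
  refine ⟨fun t => p ⟨k + t, by have := t.isLt; omega⟩,
    fun t => if h : (t : ℕ) < m + 2 then q ⟨m + 1 - t, by omega⟩
      else p ⟨i0 - ((t : ℕ) - (m + 1)), by omega⟩,
    fun t => p ⟨k - t, by omega⟩, ?_, ?_, ?_, ?_, ?_, ?_, ?_, ?_⟩
  · -- f 0 = g 0
    dsimp only
    rw [dif_pos (by simp)]
    simp only [Fin.val_zero]
    rw [show (⟨m + 1 - 0, by omega⟩ : Fin (m + 2)) = Fin.last (m + 1) from Fin.ext (by simp),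
      hqL]
    exact congrArg p (Fin.ext (by simp))
  · -- g 0 = h 0
    dsimp only
    rw [dif_pos (by simp)]
    simp only [Fin.val_zero]
    rw [show (⟨m + 1 - 0, by omega⟩ : Fin (m + 2)) = Fin.last (m + 1) from Fin.ext (by simp),
      hqL]
    exact congrArg p (Fin.ext (by simp))
  · -- IsPathEmb f
    constructor
    · intro t₁ t₂ h
      simp only [] at h
      have := path_inj hP (by have := t₁.isLt; omega) (by have := t₂.isLt; omega) h
      exact Fin.ext (by omega)
    · intro t ht
      simp only [Fin.val_mk]
      exact path_adj hP _ _ (by omega)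
  · -- IsPathEmb g
    constructor
    · intro t₁ t₂ h
      have h1 := t₁.isLt; have h2 := t₂.isLt
      simp only [] at h
      split_ifs at h with c1 c2 c2
      · have := q_inj' hq _ _ h
        exact Fin.ext (by omega)
      · rcases q_meets_p hP hi0 hk hq0 hqL hqP _ _ h with ⟨h', h''⟩ | ⟨h', h''⟩ <;> omega
      · rcases q_meets_p hP hi0 hk hq0 hqL hqP _ _ h.symm with ⟨h', h''⟩ | ⟨h', h''⟩ <;> omega
      · have := path_inj hP _ _ h
        exact Fin.ext (by omega)
    · intro t ht
      simp only [Fin.val_mk]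
      split_ifs with c1 c2 c2
      · exact (chain_adj hqa (by omega) (by omega) (by omega)).symm
      · have ht' : t = m + 1 := by omega
        subst ht'
        rw [show (⟨m + 1 - (m + 1), by omega⟩ : Fin (m + 2)) = 0 from Fin.ext (by simp),
          hq0]
        exact (path_adj hP (by omega) (by omega) (by omega)).symm
      · omega
      · exact (path_adj hP (by omega) (by omega) (by omega)).symm
  · -- IsPathEmb h
    constructor
    · intro t₁ t₂ h
      have h1 := t₁.isLt; have h2 := t₂.isLt
      simp only [] at h
      have := path_inj hP _ _ h
      exact Fin.ext (by omega)
    · intro t ht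
      simp only [Fin.val_mk]
      exact (path_adj hP (s := k - (t + 1)) (t := k - t) (by omega) (by omega)
        (by omega)).symm
  · -- f vs g
    intro t s h
    have h1 := t.isLt; have h2 := s.isLt
    simp only [] at h
    split_ifs at h with c1
    · rcases q_meets_p hP hi0 hk hq0 hqL hqP _ _ h.symm with ⟨h', h''⟩ | ⟨h', h''⟩
      · omega
      · exact ⟨fin_eq_zero _ (by omega), fin_eq_zero _ (by omega)⟩
    · have := path_inj hP _ _ h
      omega
  · -- f vs h
    intro t s h
    have h1 := t.isLt; have h2 := s.isLt
    simp only [] at h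
    have := path_inj hP _ _ h
    exact ⟨fin_eq_zero _ (by omega), fin_eq_zero _ (by omega)⟩
  · -- g vs h
    intro t s h
    have h1 := t.isLt; have h2 := s.isLt
    simp only [] at h
    split_ifs at h with c1
    · rcases q_meets_p hP hi0 hk hq0 hqL hqP _ _ h with ⟨h', h''⟩ | ⟨h', h''⟩
      · omega
      · exact ⟨fin_eq_zero _ (by omega), fin_eq_zero _ (by omega)⟩
    · have := path_inj hP _ _ h
      omega

/-- Core construction 3: center `p k`, 3-arm backward (staying above `i0`), b-arm forward,
a-arm along reversed `q` continued backward below `i0`. -/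
private lemma core3 {ℓ a b m : ℕ} {p : Fin ℓ → V} {q : Fin (m + 2) → V}
    (ha : 3 ≤ a) (hab : a ≤ b) (hP : IsPathEmb G ℓ p)
    {i0 k : ℕ} (hi0 : i0 < ℓ) (hk : k < ℓ)
    (hai : a ≤ i0) (hik : i0 + 4 ≤ k) (hkb : k + b + 1 ≤ ℓ)
    (hq : Function.Injective q) (hq0 : q 0 = p ⟨i0, hi0⟩)
    (hqL : q (Fin.last (m + 1)) = p ⟨k, hk⟩)
    (hqa : ∀ (t : ℕ) (ht : t + 1 < m + 2), G.Adj (q ⟨t, Nat.lt_of_succ_lt ht⟩) (q ⟨t + 1, ht⟩))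
    (hqP : ∀ t : Fin (m + 2), t ≠ 0 → t ≠ Fin.last (m + 1) → q t ∉ Set.range p) :
    ContainsSubdividedClaw G 3 a b := by
  refine ⟨fun t => p ⟨k - t, by omega⟩,
    fun t => if h : (t : ℕ) < m + 2 then q ⟨m + 1 - t, by omega⟩
      else p ⟨i0 - ((t : ℕ) - (m + 1)), by omega⟩,
    fun t => p ⟨k + t, by have := t.isLt; omega⟩, ?_, ?_, ?_, ?_, ?_, ?_, ?_, ?_⟩
  · -- f 0 = g 0
    dsimp only
    rw [dif_pos (by simp)]
    simp only [Fin.val_zero]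
    rw [show (⟨m + 1 - 0, by omega⟩ : Fin (m + 2)) = Fin.last (m + 1) from Fin.ext (by simp),
      hqL]
    exact congrArg p (Fin.ext (by simp))
  · -- g 0 = h 0
    dsimp only
    rw [dif_pos (by simp)]
    simp only [Fin.val_zero]
    rw [show (⟨m + 1 - 0, by omega⟩ : Fin (m + 2)) = Fin.last (m + 1) from Fin.ext (by simp),
      hqL]
    exact congrArg p (Fin.ext (by simp))
  · -- IsPathEmb f
    constructor
    · intro t₁ t₂ h
      have h1 := t₁.isLt; have h2 := t₂.isLt
      simp only [] at h
      have := path_inj hP _ _ h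
      exact Fin.ext (by omega)
    · intro t ht
      simp only [Fin.val_mk]
      exact (path_adj hP (s := k - (t + 1)) (t := k - t) (by omega) (by omega)
        (by omega)).symm
  · -- IsPathEmb g
    constructor
    · intro t₁ t₂ h
      have h1 := t₁.isLt; have h2 := t₂.isLt
      simp only [] at h
      split_ifs at h with c1 c2 c2
      · have := q_inj' hq _ _ h
        exact Fin.ext (by omega)
      · rcases q_meets_p hP hi0 hk hq0 hqL hqP _ _ h with ⟨h', h''⟩ | ⟨h', h''⟩ <;> omega
      · rcases q_meets_p hP hi0 hk hq0 hqL hqP _ _ h.symm with ⟨h', h''⟩ | ⟨h', h''⟩ <;> omega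
      · have := path_inj hP _ _ h
        exact Fin.ext (by omega)
    · intro t ht
      simp only [Fin.val_mk]
      split_ifs with c1 c2 c2
      · exact (chain_adj hqa (by omega) (by omega) (by omega)).symm
      · have ht' : t = m + 1 := by omega
        subst ht'
        rw [show (⟨m + 1 - (m + 1), by omega⟩ : Fin (m + 2)) = 0 from Fin.ext (by simp),
          hq0]
        exact (path_adj hP (by omega) (by omega) (by omega)).symm
      · omega
      · exact (path_adj hP (by omega) (by omega) (by omega)).symm
  · -- IsPathEmb h
    constructor
    · intro t₁ t₂ h
      simp only [] at h
      have := path_inj hP (by have := t₁.isLt; omega) (by have := t₂.isLt; omega) h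
      exact Fin.ext (by omega)
    · intro t ht
      simp only [Fin.val_mk]
      exact path_adj hP _ _ (by omega)
  · -- f vs g
    intro t s h
    have h1 := t.isLt; have h2 := s.isLt
    simp only [] at h
    split_ifs at h with c1
    · rcases q_meets_p hP hi0 hk hq0 hqL hqP _ _ h.symm with ⟨h', h''⟩ | ⟨h', h''⟩
      · omega
      · exact ⟨fin_eq_zero _ (by omega), fin_eq_zero _ (by omega)⟩
    · have := path_inj hP _ _ h
      omega
  · -- f vs h
    intro t s h
    have h1 := t.isLt; have h2 := s.isLt
    simp only [] at h
    have := path_inj hP _ _ h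
    exact ⟨fin_eq_zero _ (by omega), fin_eq_zero _ (by omega)⟩
  · -- g vs h
    intro t s h
    have h1 := t.isLt; have h2 := s.isLt
    simp only [] at h
    split_ifs at h with c1
    · rcases q_meets_p hP hi0 hk hq0 hqL hqP _ _ h with ⟨h', h''⟩ | ⟨h', h''⟩
      · omega
      · exact ⟨fin_eq_zero _ (by omega), fin_eq_zero _ (by omega)⟩
    · have := path_inj hP _ _ h
      omega

end


/-- For `b ≥ a ≥ 3`: if `G` has a path `P = (p_1, …, p_ℓ)` with `ℓ ≥ 3b`, and there are
positions `i, j` with `a+1 ≤ i, j ≤ ℓ−a` (0-indexed: `a ≤ i, j` and `i, j ≤ ℓ−a−1`),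
`j ≥ i+4`, joined by a path `Q` meeting `P` only in its endpoints `p_i, p_j`, then `G`
contains `S_{3,a,b}` as a subgraph. -/
theorem stmt17 {V : Type*} (G : SimpleGraph V) (a b : ℕ) (ha : 3 ≤ a) (hab : a ≤ b)
    (ℓ : ℕ) (hl : 3 * b ≤ ℓ) (p : Fin ℓ → V) (hP : IsPathEmb G ℓ p)
    (i j : Fin ℓ) (hi1 : a ≤ (i : ℕ)) (hi2 : (i : ℕ) + a + 1 ≤ ℓ)
    (hj1 : a ≤ (j : ℕ)) (hj2 : (j : ℕ) + a + 1 ≤ ℓ)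
    (hij : (i : ℕ) + 4 ≤ (j : ℕ))
    (hQ : ∃ (m : ℕ) (q : Fin (m + 2) → V),
      Function.Injective q ∧ q 0 = p i ∧ q (Fin.last (m + 1)) = p j ∧
      (∀ (t : ℕ) (ht : t + 1 < m + 2),
        G.Adj (q ⟨t, Nat.lt_of_succ_lt ht⟩) (q ⟨t + 1, ht⟩)) ∧
      (∀ t : Fin (m + 2), t ≠ 0 → t ≠ Fin.last (m + 1) → q t ∉ Set.range p)) :
    ContainsSubdividedClaw G 3 a b := by
  obtain ⟨m, q, hq, hq0, hqL, hqa, hqP⟩ := hQ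
  have hq0' : q 0 = p ⟨(i : ℕ), i.isLt⟩ := by rw [hq0]
  have hqL' : q (Fin.last (m + 1)) = p ⟨(j : ℕ), j.isLt⟩ := by rw [hqL]
  by_cases hc1 : b ≤ (i : ℕ)
  · exact core1 ha hab hP i.isLt j.isLt hc1 hij hj2 hq hq0' hqL' hqa hqP
  · by_cases hc2 : (j : ℕ) + b + 1 ≤ ℓ
    · exact core3 ha hab hP i.isLt j.isLt hi1 hij hc2 hq hq0' hqL' hqa hqP
    · by_cases hc3 : (i : ℕ) + b + 1 ≤ (j : ℕ)
      · exact core2 ha hab hP i.isLt j.isLt hi1 hc3 (by omega) hq hq0' hqL' hqa hqP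
      · omega
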